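/- Let A be a symmetric real n×n matrix with eigenvalue λ ≠ 0 and m ≥ 1, and let B be the adjacency block matrix of the m-splitting construction (top-left A, top-right A⊗1_{1×m}, bottom-left A⊗1_{m×1}, bottom-right 0). Then the two scalars μ± = λ·(1±√(1+4m))/2 are eigenvalues of B. -/
import Mathlib

lemma aux_eig (n m : ℕ) (hm : 1 ≤ m)
    (A : Matrix (Fin n) (Fin n) ℝ)
    (x : Fin n → ℝ) (hx : x ≠ 0)
    (lam : ℝ) (hAx : A.mulVec x = lam • x)
    (B : Matrix (Fin n ⊕ Fin m × Fin n) (Fin n ⊕ Fin m × Fin n) ℝ)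
    (hB : B = Matrix.fromBlocks A
      (Matrix.of fun i (p : Fin m × Fin n) => A i p.2)
      (Matrix.of fun (p : Fin m × Fin n) j => A p.2 j)
      0)
    (t : ℝ) (ht : t * t = t + m) :
    ∃ y ≠ 0, B.mulVec y = (lam * t) • y := by
  refine ⟨Sum.elim (fun i => t * x i) (fun p => x p.2), ?_, ?_⟩
  · intro h
    apply hx
    funext j
    have : Sum.elim (fun i => t * x i) (fun p : Fin m × Fin n => x p.2)
        (Sum.inr (⟨0, hm⟩, j)) = 0 := by rw [h]; rfl
    simpa using this
  · funext z
    have hAxe : ∀ i, (∑ j, A i j * x j) = lam * x i := by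
      intro i
      have := congrFun hAx i
      simpa [Matrix.mulVec, dotProduct] using this
    cases z with
    | inl i =>
      simp only [hB, Matrix.mulVec, dotProduct, Fintype.sum_sum_type,
        Matrix.fromBlocks_apply₁₁, Matrix.fromBlocks_apply₁₂, Sum.elim_inl,
        Sum.elim_inr, Matrix.of_apply, Pi.smul_apply, smul_eq_mul]
      rw [Fintype.sum_prod_type]
      simp only [Finset.sum_const, Finset.card_univ, Fintype.card_fin, nsmul_eq_mul]
      have h1 : (∑ j, A i j * (t * x j)) = t * (lam * x i) := by
        rw [← hAxe i, Finset.mul_sum]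
        apply Finset.sum_congr rfl; intro j _; ring
      rw [h1, hAxe i]
      linear_combination (-(lam * x i)) * ht
    | inr p =>
      simp only [hB, Matrix.mulVec, dotProduct, Fintype.sum_sum_type,
        Matrix.fromBlocks_apply₂₁, Matrix.fromBlocks_apply₂₂, Sum.elim_inl,
        Sum.elim_inr, Matrix.of_apply, Pi.smul_apply, smul_eq_mul,
        Matrix.zero_apply, zero_mul, Finset.sum_const_zero, add_zero]
      have h1 : (∑ j, A p.2 j * (t * x j)) = t * (lam * x p.2) := by
        rw [← hAxe p.2, Finset.mul_sum]
        apply Finset.sum_congr rfl; intro j _; ring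
      rw [h1]; ring

theorem stmt_5 (n m : ℕ) (hm : 1 ≤ m)
    (A : Matrix (Fin n) (Fin n) ℝ) (hA : A.IsSymm)
    (x : Fin n → ℝ) (hx : x ≠ 0)
    (lam : ℝ) (hlam : lam ≠ 0) (hAx : A.mulVec x = lam • x)
    (B : Matrix (Fin n ⊕ Fin m × Fin n) (Fin n ⊕ Fin m × Fin n) ℝ)
    (hB : B = Matrix.fromBlocks A
      (Matrix.of fun i (p : Fin m × Fin n) => A i p.2)
      (Matrix.of fun (p : Fin m × Fin n) j => A p.2 j)
      0) :
    (∃ y ≠ 0, B.mulVec y = (lam * ((1 + Real.sqrt (1 + 4 * m)) / 2)) • y) ∧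
    (∃ y ≠ 0, B.mulVec y = (lam * ((1 - Real.sqrt (1 + 4 * m)) / 2)) • y) := by
  have hs : Real.sqrt (1 + 4 * m) * Real.sqrt (1 + 4 * m) = 1 + 4 * m := by
    exact Real.mul_self_sqrt (by positivity)
  constructor
  · exact aux_eig n m hm A x hx lam hAx B hB _ (by nlinarith)
  · exact aux_eig n m hm A x hx lam hAx B hB _ (by nlinarith)
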